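/- Let J : ℝ → Matrix (Fin 3) (Fin 3) ℝ be differentiable at t₀ with det(J(t₀)) ≠ 0, and define A(t) = det(J(t)) • (J(t))⁻¹ * ((J(t))⁻¹)ᵀ. Then A is differentiable at t₀ and A'(t₀) = trace(J'(t₀) * (J(t₀))⁻¹) • A(t₀) − (J(t₀))⁻¹ * J'(t₀) * A(t₀) − ((J(t₀))⁻¹ * J'(t₀) * A(t₀))ᵀ, where J'(t₀) denotes the derivative of J at t₀. -/

import Mathlib

open Matrix

attribute [local instance] Matrix.normedAddCommGroup Matrix.normedSpace

private lemma entry_hasDerivAt {f : ℝ → Matrix (Fin 3) (Fin 3) ℝ} {f' : Matrix (Fin 3) (Fin 3) ℝ}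
    {t : ℝ} (h : HasDerivAt f f' t) (i j : Fin 3) :
    HasDerivAt (fun t => f t i j) (f' i j) t := by
  classical
  let L : Matrix (Fin 3) (Fin 3) ℝ →ₗ[ℝ] ℝ :=
    { toFun := fun m => m i j, map_add' := fun _ _ => rfl, map_smul' := fun _ _ => rfl }
  have hL := (LinearMap.toContinuousLinearMap L).hasFDerivAt.comp_hasDerivAt t h
  exact hL

private lemma matrix_hasDerivAt {f : ℝ → Matrix (Fin 3) (Fin 3) ℝ}
    {f' : Matrix (Fin 3) (Fin 3) ℝ} {t : ℝ}
    (h : ∀ i j, HasDerivAt (fun t => f t i j) (f' i j) t) :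
    HasDerivAt f f' t := by
  classical
  have H : HasDerivAt (fun t => ∑ i : Fin 3, ∑ j : Fin 3, f t i j • single i j (1 : ℝ))
      (∑ i : Fin 3, ∑ j : Fin 3, f' i j • single i j (1 : ℝ)) t :=
    HasDerivAt.fun_sum fun i _ => HasDerivAt.fun_sum fun j _ => (h i j).smul_const _
  have e1 : (fun t => ∑ i : Fin 3, ∑ j : Fin 3, f t i j • single i j (1 : ℝ)) = f := by
    funext s
    simp_rw [Matrix.smul_single, smul_eq_mul, mul_one]
    exact (matrix_eq_sum_single (f s)).symm
  have e2 : (∑ i : Fin 3, ∑ j : Fin 3, f' i j • single i j (1 : ℝ)) = f' := by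
    simp_rw [Matrix.smul_single, smul_eq_mul, mul_one]
    exact (matrix_eq_sum_single f').symm
  rwa [e1, e2] at H

private lemma matmul_hasDerivAt {f g : ℝ → Matrix (Fin 3) (Fin 3) ℝ}
    {f' g' : Matrix (Fin 3) (Fin 3) ℝ} {t : ℝ}
    (hf : HasDerivAt f f' t) (hg : HasDerivAt g g' t) :
    HasDerivAt (fun t => f t * g t) (f' * g t + f t * g') t := by
  apply matrix_hasDerivAt
  intro i j
  have H : HasDerivAt (fun s => ∑ k : Fin 3, f s i k * g s k j)
      (∑ k : Fin 3, (f' i k * g t k j + f t i k * g' k j)) t :=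
    HasDerivAt.fun_sum fun k _ => (entry_hasDerivAt hf i k).mul (entry_hasDerivAt hg k j)
  have e1 : (fun s => ∑ k : Fin 3, f s i k * g s k j) = fun s => (f s * g s) i j := by
    funext s; rw [Matrix.mul_apply]
  have e2 : (∑ k : Fin 3, (f' i k * g t k j + f t i k * g' k j))
      = (f' * g t + f t * g') i j := by
    simp [Matrix.mul_apply, Matrix.add_apply, Finset.sum_add_distrib]
  rwa [e1, e2] at H

private lemma transpose_hasDerivAt {f : ℝ → Matrix (Fin 3) (Fin 3) ℝ}
    {f' : Matrix (Fin 3) (Fin 3) ℝ} {t : ℝ} (hf : HasDerivAt f f' t) :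
    HasDerivAt (fun t => (f t)ᵀ) f'ᵀ t := by
  apply matrix_hasDerivAt
  intro i j
  simpa [Matrix.transpose_apply] using entry_hasDerivAt hf j i

/-- Derivative of the mass deformation coefficient
`A(t) = det J(t) • J(t)⁻¹ * (J(t)⁻¹)ᵀ`. -/
theorem deriv_mass_coefficient
    (J : ℝ → Matrix (Fin 3) (Fin 3) ℝ) (J' : Matrix (Fin 3) (Fin 3) ℝ) (t₀ : ℝ)
    (hJ : HasDerivAt J J' t₀) (hdet : (J t₀).det ≠ 0)
    (A : ℝ → Matrix (Fin 3) (Fin 3) ℝ)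
    (hA : ∀ t, A t = (J t).det • ((J t)⁻¹ * ((J t)⁻¹)ᵀ)) :
    HasDerivAt A
      ((Matrix.trace (J' * (J t₀)⁻¹)) • A t₀
        - (J t₀)⁻¹ * J' * A t₀
        - ((J t₀)⁻¹ * J' * A t₀)ᵀ) t₀ := by
  classical
  have h : ∀ i j, HasDerivAt (fun t => J t i j) (J' i j) t₀ := entry_hasDerivAt hJ
  have hd : ∀ i j, DifferentiableAt ℝ (fun t => J t i j) t₀ :=
    fun i j => (h i j).differentiableAt
  -- derivative of the determinant
  have hdet' : HasDerivAt (fun t => (J t).det) (Matrix.trace (J' * (J t₀).adjugate)) t₀ := by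
    have e1 : (fun t => (J t).det) = fun t =>
        J t 0 0 * J t 1 1 * J t 2 2 - J t 0 0 * J t 1 2 * J t 2 1
          - J t 0 1 * J t 1 0 * J t 2 2 + J t 0 1 * J t 1 2 * J t 2 0
          + J t 0 2 * J t 1 0 * J t 2 1 - J t 0 2 * J t 1 1 * J t 2 0 := by
      funext t; rw [Matrix.det_fin_three]
    rw [e1]
    have H := (((((((h 0 0).mul (h 1 1)).mul (h 2 2)).sub
        (((h 0 0).mul (h 1 2)).mul (h 2 1))).sub
        (((h 0 1).mul (h 1 0)).mul (h 2 2))).add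
        (((h 0 1).mul (h 1 2)).mul (h 2 0))).add
        (((h 0 2).mul (h 1 0)).mul (h 2 1))).sub
        (((h 0 2).mul (h 1 1)).mul (h 2 0))
    convert H using 1
    · rfl
    · rfl
    · rfl
    simp [Matrix.trace_fin_three, Matrix.mul_apply, Fin.sum_univ_three,
      Matrix.adjugate_fin_three]
    ring
  -- differentiability of the adjugate
  have hadjd : ∀ i j, DifferentiableAt ℝ (fun t => (J t).adjugate i j) t₀ := by
    intro i j
    fin_cases i <;> fin_cases j <;>
      simp only [Matrix.adjugate_fin_three, Fin.zero_eta, Fin.mk_one, Fin.isValue,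
        Matrix.cons_val', Matrix.cons_val_zero, Matrix.cons_val_one, Matrix.head_cons,
        Matrix.empty_val', Matrix.cons_val_fin_one, Matrix.head_fin_const,
        Matrix.cons_val_two, Matrix.tail_cons] <;>
      first
        | exact ((hd _ _).mul (hd _ _)).sub ((hd _ _).mul (hd _ _))
        | exact (((hd _ _).mul (hd _ _)).neg).add ((hd _ _).mul (hd _ _))
  -- the inverse written with the adjugate
  have hinv_eq : ∀ t, (J t)⁻¹ = ((J t).det)⁻¹ • (J t).adjugate := by
    intro t; rw [Matrix.inv_def, Ring.inverse_eq_inv]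
  -- differentiability of t ↦ (J t)⁻¹
  have hNd : DifferentiableAt ℝ (fun t => ((J t).det)⁻¹ • (J t).adjugate) t₀ := by
    apply DifferentiableAt.fun_smul
    · exact hdet'.differentiableAt.inv hdet
    · have : ∀ i j, HasDerivAt (fun t => (J t).adjugate i j)
          (deriv (fun t => (J t).adjugate i j) t₀) t₀ :=
        fun i j => (hadjd i j).hasDerivAt
      exact (matrix_hasDerivAt this).differentiableAt
  set N' := deriv (fun t => ((J t).det)⁻¹ • (J t).adjugate) t₀ with hN'def
  have hN : HasDerivAt (fun t => ((J t).det)⁻¹ • (J t).adjugate) N' t₀ := hNd.hasDerivAt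
  have hInv : HasDerivAt (fun t => (J t)⁻¹) N' t₀ := by
    rw [show (fun t => (J t)⁻¹) = fun t => ((J t).det)⁻¹ • (J t).adjugate from funext hinv_eq]
    exact hN
  -- compute N'
  have ev : ∀ᶠ t in nhds t₀, J t * (J t)⁻¹ = 1 := by
    have hc : ContinuousAt (fun t => (J t).det) t₀ := hdet'.differentiableAt.continuousAt
    filter_upwards [hc.eventually_ne hdet] with t ht
    exact Matrix.mul_nonsing_inv _ (isUnit_iff_ne_zero.mpr ht)
  have hone : HasDerivAt (fun _ : ℝ => (1 : Matrix (Fin 3) (Fin 3) ℝ))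
      (J' * (J t₀)⁻¹ + J t₀ * N') t₀ :=
    (matmul_hasDerivAt hJ hInv).congr_of_eventuallyEq (ev.mono fun t ht => ht.symm)
  have hzero : J' * (J t₀)⁻¹ + J t₀ * N' = 0 := hone.unique (hasDerivAt_const t₀ 1)
  have hU : IsUnit (J t₀).det := isUnit_iff_ne_zero.mpr hdet
  have hN'eq : N' = -((J t₀)⁻¹ * J' * (J t₀)⁻¹) := by
    have h1 : J t₀ * N' = -(J' * (J t₀)⁻¹) := by
      rw [eq_neg_iff_add_eq_zero, add_comm]; exact hzero
    have h2 : (J t₀)⁻¹ * (J t₀ * N') = (J t₀)⁻¹ * -(J' * (J t₀)⁻¹) := by rw [h1]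
    rw [← Matrix.mul_assoc, Matrix.nonsing_inv_mul _ hU, Matrix.one_mul] at h2
    rw [h2, Matrix.mul_neg, Matrix.mul_assoc]
  -- assemble
  have hInvT : HasDerivAt (fun t => ((J t)⁻¹)ᵀ) N'ᵀ t₀ := transpose_hasDerivAt hInv
  have hP : HasDerivAt (fun t => (J t)⁻¹ * ((J t)⁻¹)ᵀ)
      (N' * ((J t₀)⁻¹)ᵀ + (J t₀)⁻¹ * N'ᵀ) t₀ := matmul_hasDerivAt hInv hInvT
  have hAd : HasDerivAt A
      ((J t₀).det • (N' * ((J t₀)⁻¹)ᵀ + (J t₀)⁻¹ * N'ᵀ)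
        + Matrix.trace (J' * (J t₀).adjugate) • ((J t₀)⁻¹ * ((J t₀)⁻¹)ᵀ)) t₀ := by
    rw [funext hA]
    exact hdet'.smul hP
  convert hAd using 1
  have hadj_eq : (J t₀).adjugate = (J t₀).det • (J t₀)⁻¹ := by
    rw [hinv_eq t₀, smul_smul, mul_inv_cancel₀ hdet, one_smul]
  rw [hA t₀, hN'eq, hadj_eq]
  simp only [Matrix.mul_smul, Matrix.smul_mul, Matrix.trace_smul, Matrix.transpose_smul,
    Matrix.transpose_mul, Matrix.transpose_neg, Matrix.neg_mul, Matrix.mul_neg,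
    smul_eq_mul, smul_smul, Matrix.mul_assoc, smul_neg, Matrix.transpose_transpose,
    smul_add, neg_one_smul, neg_smul, one_smul]
  rw [mul_comm]
  abel
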